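/- A two-player game (u1,u2) is strategically equivalent to a potential game if and only if for every cycle of comparable profiles, the signed sum of payoff differences along the cycle is zero; equivalently, all paths between the same two profiles have equal path-weight, where the path-weight of a path x1,...,xn is the sum over i of u_{p_i}(x_{i+1}) - u_{p_i}(x_i) with p_i the player in which x_i and x_{i+1} differ. -/

import Mathlib

/-- Profiles `p q` are 1-comparable: they differ only in player 1's strategy. -/
def Comp1 {S1 S2 : Type} (p q : S1 × S2) : Prop := p.1 ≠ q.1 ∧ p.2 = q.2

/-- Profiles `p q` are 2-comparable: they differ only in player 2's strategy. -/
def Comp2 {S1 S2 : Type} (p q : S1 × S2) : Prop := p.1 = q.1 ∧ p.2 ≠ q.2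

/-- Profiles are comparable if they differ in the strategy of exactly one player. -/
def Comparable {S1 S2 : Type} (p q : S1 × S2) : Prop := Comp1 p q ∨ Comp2 p q

/-- Arc of the response graph (weak arcs: `≥` for the deviating player). -/
def Arc {S1 S2 : Type} (u1 u2 : S1 × S2 → ℝ) (p q : S1 × S2) : Prop :=
  (Comp1 p q ∧ u1 p ≤ u1 q) ∨ (Comp2 p q ∧ u2 p ≤ u2 q)

/-- Strict arc of the response graph. -/
def SArc {S1 S2 : Type} (u1 u2 : S1 × S2 → ℝ) (p q : S1 × S2) : Prop :=
  (Comp1 p q ∧ u1 p < u1 q) ∨ (Comp2 p q ∧ u2 p < u2 q)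

/-- `φ` is a potential function for the game `(v1, v2)`. -/
def IsPotential {S1 S2 : Type} (v1 v2 φ : S1 × S2 → ℝ) : Prop :=
  (∀ p q, Comp1 p q → φ p - φ q = v1 p - v1 q) ∧
  (∀ p q, Comp2 p q → φ p - φ q = v2 p - v2 q)

/-- Strategic equivalence: equal payoff differences on comparable profiles. -/
def StratEquiv {S1 S2 : Type} (u1 u2 v1 v2 : S1 × S2 → ℝ) : Prop :=
  (∀ p q, Comp1 p q → u1 p - u1 q = v1 p - v1 q) ∧
  (∀ p q, Comp2 p q → u2 p - u2 q = v2 p - v2 q)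

/-- Preference equivalence: isomorphism of response graphs. -/
def PrefEquiv {S1 S2 T1 T2 : Type} (u1 u2 : S1 × S2 → ℝ) (v1 v2 : T1 × T2 → ℝ) : Prop :=
  ∃ e : (S1 × S2) ≃ (T1 × T2), ∀ p q, Arc u1 u2 p q ↔ Arc v1 v2 (e p) (e q)

/-- The game is preference-equivalent to a zero-sum game. -/
def PrefZeroSum {S1 S2 : Type} (u1 u2 : S1 × S2 → ℝ) : Prop :=
  ∃ (T1 T2 : Type) (v : T1 × T2 → ℝ), PrefEquiv u1 u2 v (fun p => -v p)

/-- The game is preference-equivalent to a potential game. -/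
def PrefPotential {S1 S2 : Type} (u1 u2 : S1 × S2 → ℝ) : Prop :=
  ∃ (T1 T2 : Type) (v1 v2 φ : T1 × T2 → ℝ), IsPotential v1 v2 φ ∧ PrefEquiv u1 u2 v1 v2

/-- Reachability in the response graph. -/
def Reach {S1 S2 : Type} (u1 u2 : S1 × S2 → ℝ) : S1 × S2 → S1 × S2 → Prop :=
  Relation.ReflTransGen (Arc u1 u2)

/-- `p` lies in a sink strongly connected component of the response graph. -/
def InSink {S1 S2 : Type} (u1 u2 : S1 × S2 → ℝ) (p : S1 × S2) : Prop :=
  ∀ q, Reach u1 u2 p q → Reach u1 u2 q p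

/-- Genericity: no player is ever indifferent between comparable profiles. -/
def Generic {S1 S2 : Type} (u1 u2 : S1 × S2 → ℝ) : Prop :=
  (∀ p q, Comp1 p q → u1 p ≠ u1 q) ∧ (∀ p q, Comp2 p q → u2 p ≠ u2 q)

/-- Pure Nash equilibrium. -/
def IsPNE {S1 S2 : Type} (u1 u2 : S1 × S2 → ℝ) (p : S1 × S2) : Prop :=
  (∀ t, u1 (t, p.2) ≤ u1 p) ∧ (∀ t, u2 (p.1, t) ≤ u2 p)

/-- The path-weight of a path of profiles. -/
noncomputable def pathWeight {S1 S2 : Type} [DecidableEq S2] (u1 u2 : S1 × S2 → ℝ) :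
    List (S1 × S2) → ℝ
  | [] => 0
  | [_] => 0
  | p :: q :: l =>
      (if p.2 = q.2 then u1 q - u1 p else u2 q - u2 p) + pathWeight u1 u2 (q :: l)

section Aux
variable {S1 S2 : Type} [DecidableEq S2] (u1 u2 : S1 × S2 → ℝ)

noncomputable def pwstep (p q : S1 × S2) : ℝ :=
  if p.2 = q.2 then u1 q - u1 p else u2 q - u2 p

lemma pw_concat : ∀ (l : List (S1 × S2)) (p q : S1 × S2), l.getLast? = some p →
    pathWeight u1 u2 (l ++ [q]) = pathWeight u1 u2 l + pwstep u1 u2 p q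
  | [], p, q, h => by simp at h
  | [a], p, q, h => by
      simp at h; subst h
      simp [pathWeight, pwstep]
  | a :: b :: l, p, q, h => by
      have h' : (b :: l).getLast? = some p := by
        rw [List.getLast?_cons_cons] at h; exact h
      have ih := pw_concat (b :: l) p q h'
      simp only [List.cons_append, List.append_eq, pathWeight] at *
      rw [ih]; ring

lemma pwstep_potential (v1 v2 φ : S1 × S2 → ℝ)
    (h1 : ∀ p q, Comp1 p q → φ p - φ q = v1 p - v1 q)
    (h2 : ∀ p q, Comp2 p q → φ p - φ q = v2 p - v2 q)
    (e1 : ∀ p q, Comp1 p q → u1 p - u1 q = v1 p - v1 q)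
    (e2 : ∀ p q, Comp2 p q → u2 p - u2 q = v2 p - v2 q)
    (p q : S1 × S2) (hc : Comparable p q) :
    pwstep u1 u2 p q = φ q - φ p := by
  rcases hc with h | h
  · have := (h1 q p ⟨Ne.symm h.1, h.2.symm⟩).trans (e1 q p ⟨Ne.symm h.1, h.2.symm⟩).symm
    simp [pwstep, h.2]; linarith
  · have := (h2 q p ⟨h.1.symm, Ne.symm h.2⟩).trans (e2 q p ⟨h.1.symm, Ne.symm h.2⟩).symm
    simp [pwstep, h.2]; linarith

lemma pw_telescope (φ : S1 × S2 → ℝ)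
    (hstep : ∀ p q, Comparable p q → pwstep u1 u2 p q = φ q - φ p) :
    ∀ (l : List (S1 × S2)) (x y : S1 × S2), l.Chain' Comparable →
      l.head? = some x → l.getLast? = some y →
      pathWeight u1 u2 l = φ y - φ x
  | [], x, y, _, hh, _ => by simp at hh
  | [a], x, y, _, hh, hl => by
      simp at hh hl; subst hh; subst hl; simp [pathWeight]
  | a :: b :: l, x, y, hc, hh, hl => by
      simp at hh; subst hh
      have hl' : (b :: l).getLast? = some y := by
        rw [List.getLast?_cons_cons] at hl; exact hl
      have hc' := (List.isChain_cons_cons.mp hc)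
      have ih := pw_telescope φ hstep (b :: l) b y hc'.2 rfl hl'
      have hs := hstep a b hc'.1
      simp only [pathWeight] at *
      rw [ih]
      have : (if a.2 = b.2 then u1 b - u1 a else u2 b - u2 a) = pwstep u1 u2 a b := rfl
      rw [this, hs]; ring

open Classical in
/-- canonical path from p0 to q -/
noncomputable def cpath (p0 q : S1 × S2) : List (S1 × S2) :=
  if p0 = q then [p0] else if p0.1 = q.1 ∨ p0.2 = q.2 then [p0, q]
  else [p0, (q.1, p0.2), q]

lemma cpath_chain (p0 q : S1 × S2) : (cpath p0 q).Chain' Comparable := by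
  unfold cpath
  split_ifs with h1 h2
  · exact List.isChain_singleton p0
  · refine List.isChain_pair.mpr ?_
    rcases h2 with h | h
    · exact Or.inr ⟨h, fun h2 => h1 (Prod.ext h h2)⟩
    · exact Or.inl ⟨fun h2 => h1 (Prod.ext h2 h), h⟩
  · push_neg at h2
    refine List.isChain_cons_cons.mpr ⟨Or.inl ⟨fun h => h2.1 h, rfl⟩,
      List.isChain_pair.mpr (Or.inr ⟨rfl, h2.2⟩)⟩

lemma cpath_head (p0 q : S1 × S2) : (cpath p0 q).head? = some p0 := by
  unfold cpath; split_ifs <;> rfl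

lemma cpath_last (p0 q : S1 × S2) : (cpath p0 q).getLast? = some q := by
  unfold cpath; split_ifs with h <;> simp [h]

end Aux


theorem strat_potential_iff_path_independent {S1 S2 : Type} [DecidableEq S2]
    (u1 u2 : S1 × S2 → ℝ) :
    (∃ v1 v2 φ : S1 × S2 → ℝ, StratEquiv u1 u2 v1 v2 ∧ IsPotential v1 v2 φ) ↔
    (∀ (l1 l2 : List (S1 × S2)) (x y : S1 × S2),
      l1.Chain' Comparable → l2.Chain' Comparable →
      l1.head? = some x → l2.head? = some x →
      l1.getLast? = some y → l2.getLast? = some y →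
      pathWeight u1 u2 l1 = pathWeight u1 u2 l2) := by
  constructor
  · rintro ⟨v1, v2, φ, ⟨e1, e2⟩, ⟨h1, h2⟩⟩ l1 l2 x y hc1 hc2 hh1 hh2 hl1 hl2
    have hstep := pwstep_potential u1 u2 v1 v2 φ h1 h2 e1 e2
    rw [pw_telescope u1 u2 φ hstep l1 x y hc1 hh1 hl1,
        pw_telescope u1 u2 φ hstep l2 x y hc2 hh2 hl2]
  · intro H
    by_cases hne : Nonempty (S1 × S2)
    · obtain ⟨p0⟩ := hne
      set φ : S1 × S2 → ℝ := fun q => pathWeight u1 u2 (cpath p0 q) with hφ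
      have key : ∀ p q : S1 × S2, Comparable p q → φ q = φ p + pwstep u1 u2 p q := by
        intro p q hc
        have hchain : (cpath p0 p ++ [q]).Chain' Comparable := by
          rw [List.Chain', List.isChain_append]
          refine ⟨cpath_chain p0 p, List.isChain_singleton q, ?_⟩
          intro a ha b hb
          rw [cpath_last] at ha
          simp at ha hb; subst ha; subst hb; exact hc
        have hhead : (cpath p0 p ++ [q]).head? = some p0 := by
          have := cpath_head p0 p
          cases h : cpath p0 p with
          | nil => rw [h] at this; simp at this
          | cons a l => rw [h] at this; simp at this; simp [this]
        have hlast : (cpath p0 p ++ [q]).getLast? = some q := by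
          simp
        have := H (cpath p0 q) (cpath p0 p ++ [q]) p0 q (cpath_chain p0 q) hchain
          (cpath_head p0 q) hhead (cpath_last p0 q) hlast
        rw [hφ]
        simp only []
        rw [this, pw_concat u1 u2 (cpath p0 p) p q (cpath_last p0 p)]
      refine ⟨u1, u2, φ, ⟨fun p q _ => rfl, fun p q _ => rfl⟩, ?_, ?_⟩
      · intro p q h
        have := key q p (Or.inl ⟨Ne.symm h.1, h.2.symm⟩)
        rw [this]
        simp [pwstep, h.2.symm]
      · intro p q h
        have := key q p (Or.inr ⟨h.1.symm, Ne.symm h.2⟩)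
        rw [this]
        have h2 : q.2 ≠ p.2 := Ne.symm h.2
        simp [pwstep, h2]
    · refine ⟨u1, u2, 0, ⟨fun p q _ => rfl, fun p q _ => rfl⟩,
        fun p q _ => absurd ⟨p⟩ hne, fun p q _ => absurd ⟨p⟩ hne⟩
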